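/- Let G' be obtained from a connected graph G on n ≥ 1 vertices by attaching q = 3n pendant vertices to s and q = 3n pendant vertices to t, where dist_G(s,t) ≥ 2. Then every vertex of G' at which the number of (unordered) endpoint pairs admitting a shortest path through it is maximized must lie on a shortest s-t path of G. -/

import Mathlib

open SimpleGraph

variable {V : Type*}

/-- The set of shortest `s`-`t` paths in `G`. -/
def shortestPaths (G : SimpleGraph V) (s t : V) : Set (G.Walk s t) :=
  {p | p.IsPath ∧ p.length = G.dist s t}

/-- `σ_{st}`: the number of shortest `s`-`t` paths in `G`. -/
noncomputable def sigmaNum (G : SimpleGraph V) (s t : V) : ℕ :=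
  (shortestPaths G s t).ncard

/-- `σ_{st}(v)`: the number of shortest `s`-`t` paths passing through `v` as an
internal vertex. -/
noncomputable def sigmaVia (G : SimpleGraph V) (s t v : V) : ℕ :=
  {p : G.Walk s t | p.IsPath ∧ p.length = G.dist s t ∧ v ∈ p.support ∧ v ≠ s ∧ v ≠ t}.ncard

/-- Betweenness centrality of `v`, over unordered pairs `{s,t}` with `s,t ≠ v`
(expressed as half of the sum over ordered pairs; terms with `s = t`, `s = v` or
`t = v` vanish by definition of `sigmaVia`). -/
noncomputable def BC (G : SimpleGraph V) [Fintype V] (v : V) : ℚ :=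
  (∑ s : V, ∑ t : V, (sigmaVia G s t v : ℚ) / (sigmaNum G s t)) / 2

/-- `G'`: the graph obtained from `G` by attaching `q` pendant vertices `x₁,…,x_q`
(the left `Fin q` summand), each adjacent only to `s`, and `q` pendant vertices
`y₁,…,y_q` (the right `Fin q` summand), each adjacent only to `t`. -/
def attach2 (G : SimpleGraph V) (s t : V) (q : ℕ) : SimpleGraph (V ⊕ (Fin q ⊕ Fin q)) :=
  SimpleGraph.fromRel (fun a b =>
    (∃ u w, a = Sum.inl u ∧ b = Sum.inl w ∧ G.Adj u w) ∨
    (∃ i : Fin q, a = Sum.inl s ∧ b = Sum.inr (Sum.inl i)) ∨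
    (∃ j : Fin q, a = Sum.inl t ∧ b = Sum.inr (Sum.inr j)))

/-- The number of unordered endpoint pairs `{a,b}`, `a, b ≠ w`, admitting a shortest
`a`-`b` path through `w`. -/
noncomputable def pairCount {W : Type*} (H : SimpleGraph W) (w : W) : ℕ :=
  {z : Sym2 W | ∃ a b : W, z = Sym2.mk a b ∧ a ≠ w ∧ b ≠ w ∧
    ∃ p : H.Walk a b, p.IsPath ∧ p.length = H.dist a b ∧ w ∈ p.support}.ncard

section helpers
variable {G : SimpleGraph V} {s t : V} {q : ℕ}

/-- Anchor of a pendant vertex. -/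
def anchor (s t : V) : (Fin q ⊕ Fin q) → V := Sum.elim (fun _ => s) (fun _ => t)

lemma attach2_adj_inl {u w : V} :
    (attach2 G s t q).Adj (Sum.inl u) (Sum.inl w) ↔ G.Adj u w := by
  constructor
  · rintro ⟨hne, (⟨u', w', h1, h2, h3⟩ | ⟨i, h1, h2⟩ | ⟨j, h1, h2⟩) |
      (⟨u', w', h1, h2, h3⟩ | ⟨i, h1, h2⟩ | ⟨j, h1, h2⟩)⟩ <;>
        simp_all <;> first | exact h3 | exact h3.symm
  · intro h
    exact ⟨by simp [h.ne], Or.inl (Or.inl ⟨u, w, rfl, rfl, h⟩)⟩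

lemma attach2_adj_pend {z : Fin q ⊕ Fin q} {c : V ⊕ (Fin q ⊕ Fin q)} :
    (attach2 G s t q).Adj (Sum.inr z) c ↔ c = Sum.inl (anchor s t z) := by
  constructor
  · rintro ⟨hne, (⟨u', w', h1, h2, h3⟩ | ⟨i, h1, h2⟩ | ⟨j, h1, h2⟩) |
      (⟨u', w', h1, h2, h3⟩ | ⟨i, h1, h2⟩ | ⟨j, h1, h2⟩)⟩ <;>
      simp_all [anchor] <;> cases z <;> simp_all
  · rintro rfl
    cases z with
    | inl i => exact ⟨by simp, Or.inr (Or.inr (Or.inl ⟨i, rfl, rfl⟩))⟩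
    | inr j => exact ⟨by simp, Or.inr (Or.inr (Or.inr ⟨j, rfl, rfl⟩))⟩

end helpers
section dist
variable {G : SimpleGraph V} {s t : V} {q : ℕ}

/-- The inclusion homomorphism `G →g attach2 G s t q`. -/
def homInl (G : SimpleGraph V) (s t : V) (q : ℕ) : G →g attach2 G s t q :=
  ⟨Sum.inl, fun h => attach2_adj_inl.mpr h⟩

@[simp] lemma homInl_apply (u : V) : homInl G s t q u = Sum.inl u := rfl

lemma attach2_connected (hG : G.Connected) : (attach2 G s t q).Connected := by
  have hinl : ∀ u : V, (attach2 G s t q).Reachable (Sum.inl s) (Sum.inl u) := by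
    intro u
    exact ⟨((hG s u).some.map (homInl G s t q)).copy rfl rfl⟩
  have hall : ∀ a, (attach2 G s t q).Reachable (Sum.inl s) a := by
    rintro (u | z)
    · exact hinl u
    · refine (hinl (anchor s t z)).trans ?_
      exact (Adj.reachable (attach2_adj_pend.mpr rfl)).symm
  have : Nonempty (V ⊕ (Fin q ⊕ Fin q)) := ⟨Sum.inl s⟩
  exact ⟨fun a b => (hall a).symm.trans (hall b)⟩

lemma dist_le_walk_length (hG : G.Connected) :
    ∀ n (a b : V ⊕ (Fin q ⊕ Fin q)) (p : (attach2 G s t q).Walk a b) (u w : V),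
      p.length ≤ n → a = Sum.inl u → b = Sum.inl w → G.dist u w ≤ p.length := by
  intro n
  induction n with
  | zero =>
    intro a b p u w hlen ha hb
    cases p with
    | nil =>
      have : u = w := by rw [ha] at hb; exact Sum.inl.inj hb
      subst this
      simp [SimpleGraph.dist_self]
    | cons h p' => simp [Walk.length_cons] at hlen
  | succ n ih =>
    intro a b p u w hlen ha hb
    cases p with
    | nil =>
      have : u = w := by rw [ha] at hb; exact Sum.inl.inj hb
      subst this
      simp [SimpleGraph.dist_self]
    | cons h p' =>
      subst ha hb
      rename_i c
      match c, h with
      | Sum.inl u', h =>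
        have hadj : G.Adj u u' := attach2_adj_inl.mp h
        have h1 : G.dist u w ≤ G.dist u u' + G.dist u' w := hG.dist_triangle
        have h2 : G.dist u u' ≤ 1 := by
          simpa using SimpleGraph.dist_le (Walk.cons hadj Walk.nil)
        have h3 : G.dist u' w ≤ p'.length := by
          refine ih _ _ p' u' w ?_ rfl rfl
          simp [Walk.length_cons] at hlen; omega
        simp [Walk.length_cons]; omega
      | Sum.inr z, h =>
        cases p' with
        | cons h2 p'' =>
          rename_i c2
          have hc2 : c2 = Sum.inl (anchor s t z) := attach2_adj_pend.mp h2
          have hu : Sum.inl u = Sum.inl (anchor s t z) := attach2_adj_pend.mp h.symm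
          subst hc2
          have hu' : u = anchor s t z := Sum.inl.inj hu
          subst hu'
          have h3 : G.dist (anchor s t z) w ≤ p''.length := by
            refine ih _ _ p'' _ w ?_ rfl rfl
            simp [Walk.length_cons] at hlen; omega
          simp [Walk.length_cons]; omega

lemma attach2_dist_inl (hG : G.Connected) (u w : V) :
    (attach2 G s t q).dist (Sum.inl u) (Sum.inl w) = G.dist u w := by
  have hle : (attach2 G s t q).dist (Sum.inl u) (Sum.inl w) ≤ G.dist u w := by
    obtain ⟨p, -, hlen⟩ := hG.exists_path_of_dist u w
    calc (attach2 G s t q).dist (Sum.inl u) (Sum.inl w) ≤ (p.map (homInl G s t q)).length :=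
          SimpleGraph.dist_le _
      _ = G.dist u w := by rw [Walk.length_map, hlen]
  refine le_antisymm hle ?_
  obtain ⟨p, hlen⟩ := ((attach2_connected (s := s) (t := t) (q := q) hG)).exists_walk_length_eq_dist
    (Sum.inl u) (Sum.inl w)
  rw [← hlen]
  exact dist_le_walk_length hG p.length _ _ p u w le_rfl rfl rfl
end dist
section pend
variable {G : SimpleGraph V} {s t : V} {q : ℕ}

lemma pend_dist_ge (hG : G.Connected) {z : Fin q ⊕ Fin q} {c : V ⊕ (Fin q ⊕ Fin q)}
    (hc : c ≠ Sum.inr z) :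
    1 + (attach2 G s t q).dist (Sum.inl (anchor s t z)) c
      ≤ (attach2 G s t q).dist (Sum.inr z) c := by
  obtain ⟨p, hlen⟩ :=
    ((attach2_connected (s := s) (t := t) (q := q) hG) (Sum.inr z) c).exists_walk_length_eq_dist
  rw [← hlen]
  cases p with
  | nil => exact absurd rfl hc
  | cons h p' =>
    rename_i c2
    have hc2 : c2 = Sum.inl (anchor s t z) := attach2_adj_pend.mp h
    subst hc2
    have := SimpleGraph.dist_le p'
    simp [Walk.length_cons]
    omega

lemma pend_adj_dist (hG : G.Connected) (z : Fin q ⊕ Fin q) :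
    (attach2 G s t q).dist (Sum.inr z) (Sum.inl (anchor s t z)) ≤ 1 := by
  refine le_trans (SimpleGraph.dist_le (Walk.cons (attach2_adj_pend.mpr rfl) Walk.nil)) ?_
  simp

lemma split_dist {W : Type*} {H : SimpleGraph W} {a b c : W} (p : H.Walk a b)
    (hlen : p.length = H.dist a b) (hmem : c ∈ p.support) :
    H.dist a c + H.dist c b ≤ H.dist a b := by
  classical
  rw [← hlen]
  calc H.dist a c + H.dist c b
      ≤ (p.takeUntil _ hmem).length + (p.dropUntil _ hmem).length :=
        Nat.add_le_add (SimpleGraph.dist_le _) (SimpleGraph.dist_le _)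
    _ = p.length := by rw [← Walk.length_append, p.take_spec hmem]

/-- A pendant vertex is never an internal vertex of a shortest path. -/
lemma pend_not_internal (hG : G.Connected) {z : Fin q ⊕ Fin q} {a b : V ⊕ (Fin q ⊕ Fin q)}
    (p : (attach2 G s t q).Walk a b) (hlen : p.length = (attach2 G s t q).dist a b)
    (hmem : Sum.inr z ∈ p.support) (ha : a ≠ Sum.inr z) (hb : b ≠ Sum.inr z) : False := by
  have hG' : (attach2 G s t q).Connected := attach2_connected hG
  have hsplit := split_dist p hlen hmem
  have h1 := pend_dist_ge (s := s) (t := t) hG (z := z) ha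
  have h2 := pend_dist_ge (s := s) (t := t) hG (z := z) hb
  have htri : (attach2 G s t q).dist a b ≤ (attach2 G s t q).dist a (Sum.inl (anchor s t z))
      + (attach2 G s t q).dist (Sum.inl (anchor s t z)) b := hG'.dist_triangle
  have e1 : (attach2 G s t q).dist a (Sum.inr z) = (attach2 G s t q).dist (Sum.inr z) a :=
    SimpleGraph.dist_comm ..
  have e2 : (attach2 G s t q).dist a (Sum.inl (anchor s t z))
      = (attach2 G s t q).dist (Sum.inl (anchor s t z)) a := SimpleGraph.dist_comm ..
  omega

lemma inl_between_pendants (hG : G.Connected) {z₁ z₂ : Fin q ⊕ Fin q} {v : V}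
    (p : (attach2 G s t q).Walk (Sum.inr z₁) (Sum.inr z₂))
    (hlen : p.length = (attach2 G s t q).dist (Sum.inr z₁) (Sum.inr z₂))
    (hmem : Sum.inl v ∈ p.support) :
    G.dist (anchor s t z₁) v + G.dist v (anchor s t z₂)
      ≤ G.dist (anchor s t z₁) (anchor s t z₂) := by
  have hG' : (attach2 G s t q).Connected := attach2_connected hG
  have hsplit := split_dist p hlen hmem
  have h1 : 1 + (attach2 G s t q).dist (Sum.inl (anchor s t z₁)) (Sum.inl v)
      ≤ (attach2 G s t q).dist (Sum.inr z₁) (Sum.inl v) := pend_dist_ge hG (by simp)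
  have h2 : 1 + (attach2 G s t q).dist (Sum.inl (anchor s t z₂)) (Sum.inl v)
      ≤ (attach2 G s t q).dist (Sum.inr z₂) (Sum.inl v) := pend_dist_ge hG (by simp)
  have t1 : (attach2 G s t q).dist (Sum.inr z₁) (Sum.inr z₂)
      ≤ (attach2 G s t q).dist (Sum.inr z₁) (Sum.inl (anchor s t z₁))
        + (attach2 G s t q).dist (Sum.inl (anchor s t z₁)) (Sum.inr z₂) := hG'.dist_triangle
  have t2 : (attach2 G s t q).dist (Sum.inl (anchor s t z₁)) (Sum.inr z₂)
      ≤ (attach2 G s t q).dist (Sum.inl (anchor s t z₁)) (Sum.inl (anchor s t z₂))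
        + (attach2 G s t q).dist (Sum.inl (anchor s t z₂)) (Sum.inr z₂) := hG'.dist_triangle
  have e1 := pend_adj_dist (s := s) (t := t) hG z₁
  have e2 := pend_adj_dist (s := s) (t := t) hG z₂
  have c1 : (attach2 G s t q).dist (Sum.inl (anchor s t z₂)) (Sum.inr z₂)
      = (attach2 G s t q).dist (Sum.inr z₂) (Sum.inl (anchor s t z₂)) := SimpleGraph.dist_comm ..
  have c2 : (attach2 G s t q).dist (Sum.inl v) (Sum.inr z₂)
      = (attach2 G s t q).dist (Sum.inr z₂) (Sum.inl v) := SimpleGraph.dist_comm ..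
  have hd1 : (attach2 G s t q).dist (Sum.inl (anchor s t z₁)) (Sum.inl v)
      = G.dist (anchor s t z₁) v := attach2_dist_inl hG _ _
  have hd2 : (attach2 G s t q).dist (Sum.inl (anchor s t z₂)) (Sum.inl v)
      = G.dist (anchor s t z₂) v := attach2_dist_inl hG _ _
  have hd3 : (attach2 G s t q).dist (Sum.inl (anchor s t z₁)) (Sum.inl (anchor s t z₂))
      = G.dist (anchor s t z₁) (anchor s t z₂) := attach2_dist_inl hG _ _
  have c3 : G.dist v (anchor s t z₂) = G.dist (anchor s t z₂) v := SimpleGraph.dist_comm ..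
  omega
end pend
section count
variable {G : SimpleGraph V} {s t : V} {q : ℕ}

lemma pairCount_pend [Fintype V] (hG : G.Connected) (z : Fin q ⊕ Fin q) :
    pairCount (attach2 G s t q) (Sum.inr z) = 0 := by
  unfold pairCount
  rw [Set.ncard_eq_zero (Set.toFinite _)]
  rw [Set.eq_empty_iff_forall_notMem]
  rintro x ⟨a, b, rfl, ha, hb, p, hp, hlen, hmem⟩
  exact pend_not_internal hG p hlen hmem ha hb

lemma dist_pend_pend (hG : G.Connected) (i j : Fin q) :
    (attach2 G s t q).dist (Sum.inr (Sum.inl i)) (Sum.inr (Sum.inr j)) = G.dist s t + 2 := by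
  obtain ⟨p₀, hp₀, hl₀⟩ := hG.exists_path_of_dist s t
  have hx : (attach2 G s t q).Adj (Sum.inr (Sum.inl i)) (Sum.inl s) := attach2_adj_pend.mpr rfl
  have hy : (attach2 G s t q).Adj (Sum.inl t) (Sum.inr (Sum.inr j)) :=
    ((attach2_adj_pend (z := Sum.inr j) (c := Sum.inl t)).mpr rfl).symm
  refine le_antisymm ?_ ?_
  · refine le_trans (SimpleGraph.dist_le
      ((Walk.cons hx (((p₀.map (homInl G s t q)).copy (homInl_apply s) (homInl_apply t) :
        (attach2 G s t q).Walk (Sum.inl s) (Sum.inl t)))).concat hy)) ?_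
    simp only [Walk.length_concat, Walk.length_cons, Walk.length_copy, Walk.length_map, hl₀]
    try omega
  · have h1 : 1 + (attach2 G s t q).dist (Sum.inl s) (Sum.inr (Sum.inr j))
        ≤ (attach2 G s t q).dist (Sum.inr (Sum.inl i)) (Sum.inr (Sum.inr j)) :=
      pend_dist_ge (z := Sum.inl i) (c := Sum.inr (Sum.inr j)) hG (by simp)
    have h2 : 1 + (attach2 G s t q).dist (Sum.inl t) (Sum.inl s)
        ≤ (attach2 G s t q).dist (Sum.inr (Sum.inr j)) (Sum.inl s) :=
      pend_dist_ge (z := Sum.inr j) (c := Sum.inl s) hG (by simp)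
    have c1 : (attach2 G s t q).dist (Sum.inl s) (Sum.inr (Sum.inr j))
        = (attach2 G s t q).dist (Sum.inr (Sum.inr j)) (Sum.inl s) := SimpleGraph.dist_comm ..
    have hd : (attach2 G s t q).dist (Sum.inl t) (Sum.inl s) = G.dist t s :=
      attach2_dist_inl hG _ _
    have c2 : G.dist t s = G.dist s t := SimpleGraph.dist_comm ..
    omega

lemma pairCount_ge [Fintype V] (hG : G.Connected) :
    q * q ≤ pairCount (attach2 G s t q) (Sum.inl s) := by
  classical
  obtain ⟨p₀, hp₀, hl₀⟩ := hG.exists_path_of_dist s t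
  set p₁ : (attach2 G s t q).Walk (Sum.inl s) (Sum.inl t) :=
    (p₀.map (homInl G s t q)).copy (homInl_apply s) (homInl_apply t) with hp₁def
  have hp₁ : p₁.IsPath := (Walk.isPath_copy _ _ _).mpr (Walk.map_isPath_of_injective Sum.inl_injective hp₀)
  have hs₁ : ∀ c, c ∈ p₁.support ↔ ∃ u ∈ p₀.support, Sum.inl u = c := by
    intro c; rw [hp₁def, Walk.support_copy, Walk.support_map, List.mem_map]; simp
  set f : Fin q × Fin q → Sym2 (V ⊕ (Fin q ⊕ Fin q)) :=
    fun ij => Sym2.mk (Sum.inr (Sum.inl ij.1)) (Sum.inr (Sum.inr ij.2)) with hfdef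
  have hinj : Function.Injective f := by
    rintro ⟨i₁, j₁⟩ ⟨i₂, j₂⟩ hab
    simp only [hfdef, Sym2.eq_iff, Prod.mk.injEq, Prod.swap_prod_mk] at hab
    rcases hab with ⟨h1, h2⟩ | ⟨h1, h2⟩
    · exact Prod.ext (Sum.inl.inj (Sum.inr.inj h1)) (Sum.inr.inj (Sum.inr.inj h2))
    · exact absurd (Sum.inr.inj h1) (by simp)
  have hsub : Set.range f ⊆ {z : Sym2 (V ⊕ (Fin q ⊕ Fin q)) |
      ∃ a b, z = Sym2.mk a b ∧ a ≠ Sum.inl s ∧ b ≠ Sum.inl s ∧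
      ∃ p : (attach2 G s t q).Walk a b, p.IsPath ∧ p.length = (attach2 G s t q).dist a b ∧
        Sum.inl s ∈ p.support} := by
    rintro z ⟨⟨i, j⟩, rfl⟩
    refine ⟨Sum.inr (Sum.inl i), Sum.inr (Sum.inr j), rfl, by simp, by simp, ?_⟩
    have hx : (attach2 G s t q).Adj (Sum.inr (Sum.inl i)) (Sum.inl s) := attach2_adj_pend.mpr rfl
    have hy : (attach2 G s t q).Adj (Sum.inl t) (Sum.inr (Sum.inr j)) :=
      ((attach2_adj_pend (z := Sum.inr j) (c := Sum.inl t)).mpr rfl).symm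
    refine ⟨(Walk.cons hx p₁).concat hy, ?_, ?_, ?_⟩
    · rw [← Walk.isPath_reverse_iff, Walk.reverse_concat]
      rw [Walk.cons_isPath_iff]
      constructor
      · rw [Walk.isPath_reverse_iff, Walk.cons_isPath_iff]
        refine ⟨hp₁, ?_⟩
        rw [hs₁]; simp
      · rw [Walk.support_reverse, List.mem_reverse, Walk.support_cons]
        intro hc
        rcases List.mem_cons.mp hc with h | h
        · simp at h
        · rw [hs₁] at h; simp at h
    · rw [dist_pend_pend hG]
      simp only [hp₁def, Walk.length_concat, Walk.length_cons, Walk.length_copy, Walk.length_map, hl₀]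
      try omega
    · rw [Walk.support_concat]
      refine List.mem_append_left _ ?_
      rw [Walk.support_cons]
      refine List.mem_cons_of_mem _ ?_
      rw [hs₁]
      exact ⟨s, p₀.start_mem_support, rfl⟩
  unfold pairCount
  calc q * q = Nat.card (Fin q × Fin q) := by simp [Nat.card_eq_fintype_card]
    _ = Nat.card (Set.range f) := (Nat.card_range_of_injective hinj).symm
    _ = (Set.range f).ncard := Nat.card_coe_set_eq _
    _ ≤ _ := Set.ncard_le_ncard hsub (Set.toFinite _)

lemma pairCount_bad_le [Fintype V] (hG : G.Connected) (v : V)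
    (hbad : ¬ (G.dist s v + G.dist v t = G.dist s t)) :
    pairCount (attach2 G s t q) (Sum.inl v)
      ≤ Fintype.card V * (Fintype.card V + (q + q)) := by
  classical
  unfold pairCount
  have hsub : {z : Sym2 (V ⊕ (Fin q ⊕ Fin q)) |
      ∃ a b, z = Sym2.mk a b ∧ a ≠ Sum.inl v ∧ b ≠ Sum.inl v ∧
      ∃ p : (attach2 G s t q).Walk a b, p.IsPath ∧ p.length = (attach2 G s t q).dist a b ∧
        Sum.inl v ∈ p.support}
      ⊆ (fun x => Sym2.mk x.1 x.2) '' ((Set.range Sum.inl) ×ˢ (Set.univ : Set (V ⊕ (Fin q ⊕ Fin q)))) := by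
    rintro z ⟨a, b, rfl, ha, hb, p, hp, hlen, hmem⟩
    match a, b, p, ha, hb, hlen, hmem with
    | Sum.inl u, b, p, ha, hb, hlen, hmem =>
      exact ⟨(Sum.inl u, b), ⟨⟨u, rfl⟩, trivial⟩, rfl⟩
    | Sum.inr z₁, Sum.inl u, p, ha, hb, hlen, hmem =>
      exact ⟨(Sum.inl u, Sum.inr z₁), ⟨⟨u, rfl⟩, trivial⟩, Sym2.eq_swap⟩
    | Sum.inr z₁, Sum.inr z₂, p, ha, hb, hlen, hmem =>
      exfalso
      have hkey := inl_between_pendants hG p hlen hmem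
      have htri : G.dist s t ≤ G.dist s v + G.dist v t := hG.dist_triangle
      have hc1 : G.dist v s = G.dist s v := SimpleGraph.dist_comm ..
      have hc2 : G.dist t v = G.dist v t := SimpleGraph.dist_comm ..
      have hc3 : G.dist t s = G.dist s t := SimpleGraph.dist_comm ..
      rcases z₁ with i₁ | j₁ <;> rcases z₂ with i₂ | j₂ <;> simp only [anchor, Sum.elim_inl,
        Sum.elim_inr] at hkey
      · -- anchors (s, s)
        have h0 : G.dist s s = 0 := SimpleGraph.dist_self
        have hv : G.dist s v = 0 := by omega
        have : v = s := (hG.dist_eq_zero_iff.mp (hc1 ▸ hv)).symm ▸ (hG.dist_eq_zero_iff.mp hv).symm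
        subst this
        exact hbad (by simp [SimpleGraph.dist_self] at *; try omega)
      · -- anchors (s, t)
        exact hbad (le_antisymm hkey htri)
      · -- anchors (t, s)
        exact hbad (le_antisymm (by omega) htri)
      · -- anchors (t, t)
        have h0 : G.dist t t = 0 := SimpleGraph.dist_self
        have hv : G.dist v t = 0 := by omega
        have : v = t := hG.dist_eq_zero_iff.mp hv
        subst this
        exact hbad (by simp [SimpleGraph.dist_self, hc3] at *; try omega)
  calc _ ≤ ((fun x => Sym2.mk x.1 x.2) '' ((Set.range (Sum.inl : V → V ⊕ (Fin q ⊕ Fin q))) ×ˢ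
        (Set.univ : Set (V ⊕ (Fin q ⊕ Fin q))))).ncard :=
        Set.ncard_le_ncard hsub (Set.toFinite _)
    _ ≤ ((Set.range (Sum.inl : V → V ⊕ (Fin q ⊕ Fin q))) ×ˢ
        (Set.univ : Set (V ⊕ (Fin q ⊕ Fin q)))).ncard := Set.ncard_image_le (Set.toFinite _)
    _ = Fintype.card V * (Fintype.card V + (q + q)) := by
        rw [← Nat.card_coe_set_eq, Nat.card_congr (Equiv.Set.prod _ _), Nat.card_prod,
          Nat.card_range_of_injective Sum.inl_injective, Nat.card_congr (Equiv.Set.univ _)]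
        simp [Nat.card_eq_fintype_card]
end count

/-- With `q = 3n`, `n ≥ 1` and `dist_G(s,t) ≥ 2`, every vertex of `G'`
maximizing the number of unordered endpoint pairs admitting a shortest path through it
lies on a shortest `s`-`t` path of `G`. -/
theorem stmt5 [Fintype V] (G : SimpleGraph V) (hG : G.Connected) (s t : V)
    (hn : 1 ≤ Fintype.card V) (hd : 2 ≤ G.dist s t)
    (w : V ⊕ (Fin (3 * Fintype.card V) ⊕ Fin (3 * Fintype.card V)))
    (hmax : ∀ u : V ⊕ (Fin (3 * Fintype.card V) ⊕ Fin (3 * Fintype.card V)),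
      pairCount (attach2 G s t (3 * Fintype.card V)) u
        ≤ pairCount (attach2 G s t (3 * Fintype.card V)) w) :
    ∃ v : V, w = Sum.inl v ∧ G.dist s v + G.dist v t = G.dist s t := by
  classical
  have hq : (3 * Fintype.card V) * (3 * Fintype.card V)
      ≤ pairCount (attach2 G s t (3 * Fintype.card V)) (Sum.inl s) := pairCount_ge hG
  cases w with
  | inr z =>
    exfalso
    have h0 := pairCount_pend (s := s) (t := t) (q := 3 * Fintype.card V) hG z
    have hle := hmax (Sum.inl s)
    have h9 : 1 * 1 ≤ (3 * Fintype.card V) * (3 * Fintype.card V) :=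
      Nat.mul_le_mul (by omega) (by omega)
    omega
  | inl v =>
    refine ⟨v, rfl, ?_⟩
    by_contra hbad
    have hub := pairCount_bad_le (q := 3 * Fintype.card V) hG v hbad
    have hle := hmax (Sum.inl s)
    have e1 : (3 * Fintype.card V) * (3 * Fintype.card V)
        = 9 * (Fintype.card V * Fintype.card V) := by ring
    have e2 : Fintype.card V * (Fintype.card V + (3 * Fintype.card V + 3 * Fintype.card V))
        = 7 * (Fintype.card V * Fintype.card V) := by ring
    have hnn : 1 * 1 ≤ Fintype.card V * Fintype.card V := Nat.mul_le_mul hn hn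
    omega
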